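/- Let G̃ = diag(g₁,…,gₙ) with all gᵢ ≠ 0, and K a symmetric n×n real matrix. A matrix Γ̃ satisfies G̃ Γ̃ + Γ̃ᵀ G̃ = K if and only if its components satisfy gᵢ Γ̃_{ij} + gⱼ Γ̃_{ji} = K_{ij} for all i,j. Moreover the general solution is Γ̃ = P + Q G̃ + R where Pᵀ = P, Qᵀ = −Q, Rᵀ = −R, with P_{ij} = K_{ij}/(gᵢ+gⱼ) and R_{ij} = 0 when gᵢ+gⱼ ≠ 0, and Q_{ij} = 0 and R_{ij} = K_{ij}/(2gᵢ) when gᵢ+gⱼ = 0, the remaining entries of P and Q arbitrary subject only to the stated symmetries. -/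

import Mathlib

open Matrix

theorem general_solution_of_metric_equation {n : ℕ}
    (g : Fin n → ℝ) (hg : ∀ i, g i ≠ 0)
    (K : Matrix (Fin n) (Fin n) ℝ) (hK : Kᵀ = K)
    (Γ : Matrix (Fin n) (Fin n) ℝ) :
    ((Matrix.diagonal g * Γ + Γᵀ * Matrix.diagonal g = K) ↔
      (∀ i j : Fin n, g i * Γ i j + g j * Γ j i = K i j)) ∧
    ((Matrix.diagonal g * Γ + Γᵀ * Matrix.diagonal g = K) ↔
      ∃ P Q R : Matrix (Fin n) (Fin n) ℝ,
        Pᵀ = P ∧ Qᵀ = -Q ∧ Rᵀ = -R ∧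
        (∀ i j : Fin n, g i + g j ≠ 0 →
          P i j = K i j / (g i + g j) ∧ R i j = 0) ∧
        (∀ i j : Fin n, g i + g j = 0 →
          Q i j = 0 ∧ R i j = K i j / (2 * g i)) ∧
        Γ = P + Q * Matrix.diagonal g + R) := by
  have hKs : ∀ i j, K j i = K i j := fun i j => congrFun (congrFun hK i) j
  have h1 : (Matrix.diagonal g * Γ + Γᵀ * Matrix.diagonal g = K) ↔
      (∀ i j : Fin n, g i * Γ i j + g j * Γ j i = K i j) := by
    constructor
    · intro h i j
      have := congrFun (congrFun h i) j
      simp only [Matrix.add_apply, Matrix.diagonal_mul, Matrix.mul_diagonal,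
        Matrix.transpose_apply] at this
      linarith
    · intro h
      ext i j
      have := h i j
      simp only [Matrix.add_apply, Matrix.diagonal_mul, Matrix.mul_diagonal,
        Matrix.transpose_apply]
      linarith
  refine ⟨h1, h1.trans ?_⟩
  constructor
  · intro h
    refine ⟨Matrix.of fun i j => if g i + g j = 0 then Γ i j - K i j / (2 * g i)
        else K i j / (g i + g j),
      Matrix.of fun i j => if g i + g j = 0 then 0
        else (Γ i j - K i j / (g i + g j)) / g j,
      Matrix.of fun i j => if g i + g j = 0 then K i j / (2 * g i) else 0,
      ?_, ?_, ?_, ?_, ?_, ?_⟩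
    · ext i j
      simp only [Matrix.transpose_apply, Matrix.of_apply]
      have hsym : (g j + g i = 0) ↔ (g i + g j = 0) := by constructor <;> intro <;> linarith
      by_cases hc : g i + g j = 0
      · rw [if_pos (hsym.mpr hc), if_pos hc]
        have hji : g j = -g i := by linarith
        have hij := h i j
        rw [hji] at hij
        have hgi := hg i
        rw [hKs i j, hji]
        field_simp
        linear_combination (-2) * hij
      · rw [if_neg (fun hh => hc (hsym.mp hh)), if_neg hc]
        rw [hKs i j]
        ring_nf
    · ext i j
      simp only [Matrix.transpose_apply, Matrix.of_apply, Matrix.neg_apply]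
      have hsym : (g j + g i = 0) ↔ (g i + g j = 0) := by constructor <;> intro <;> linarith
      by_cases hc : g i + g j = 0
      · rw [if_pos (hsym.mpr hc), if_pos hc]; ring
      · rw [if_neg (fun hh => hc (hsym.mp hh)), if_neg hc]
        have hij := h i j
        have hgi := hg i
        have hgj := hg j
        rw [hKs i j]
        have hc' : g j + g i ≠ 0 := fun hh => hc (by linarith)
        field_simp
        linear_combination (g i + g j) ^ 2 * hij
    · ext i j
      simp only [Matrix.transpose_apply, Matrix.of_apply, Matrix.neg_apply]
      have hsym : (g j + g i = 0) ↔ (g i + g j = 0) := by constructor <;> intro <;> linarith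
      by_cases hc : g i + g j = 0
      · rw [if_pos (hsym.mpr hc), if_pos hc]
        have hji : g j = -g i := by linarith
        rw [hKs i j, hji]
        ring_nf
      · rw [if_neg (fun hh => hc (hsym.mp hh)), if_neg hc]; ring
    · intro i j hc
      simp only [Matrix.of_apply, if_neg hc]
      exact ⟨trivial, trivial⟩
    · intro i j hc
      simp only [Matrix.of_apply, if_pos hc]
      exact ⟨trivial, trivial⟩
    · ext i j
      simp only [Matrix.add_apply, Matrix.mul_diagonal, Matrix.of_apply]
      by_cases hc : g i + g j = 0
      · rw [if_pos hc, if_pos hc, if_pos hc]; ring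
      · rw [if_neg hc, if_neg hc, if_neg hc]
        have hgj := hg j
        field_simp
        ring
  · rintro ⟨P, Q, R, hP, hQ, hR, hne, heq, rfl⟩
    intro i j
    have hPs : P j i = P i j := congrFun (congrFun hP i) j
    have hQs : Q j i = -Q i j := congrFun (congrFun hQ i) j
    have hRs : R j i = -R i j := congrFun (congrFun hR i) j
    simp only [Matrix.add_apply, Matrix.mul_diagonal]
    by_cases hc : g i + g j = 0
    · have hc' : g j + g i = 0 := by linarith
      obtain ⟨-, hRij⟩ := heq i j hc
      obtain ⟨-, hRji⟩ := heq j i hc'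
      have hji : g j = -g i := by linarith
      have hgi := hg i
      rw [hRij] at *
      rw [hRji, hKs i j, hji] at *
      rw [hPs, hQs]
      field_simp
      ring
    · have hc' : g j + g i ≠ 0 := fun hh => hc (by linarith)
      obtain ⟨hPij, hRij⟩ := hne i j hc
      obtain ⟨hPji, hRji⟩ := hne j i hc'
      rw [hPij, hRij, hPs, hPij, hQs, hRs, hRij]
      field_simp
      ring
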